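/- Let q : ℕ → ℝ be a non-increasing sequence of non-negative numbers with q 0 > 0, and Q n = ∑_{k=0}^{n-1} q k. If the limit of Q(2^k)/Q(2^{k-1}) as k → ∞ exists and the sequence 2^k · q(2^k) / Q(2^k) tends to 0 as k → ∞, then Q(2^k)/Q(2^{k-1}) → 1 as k → ∞. -/

import Mathlib

open Filter

theorem stmt_1 (q : ℕ → ℝ) (hq : Antitone q) (hq0 : ∀ k, 0 ≤ q k) (hq0' : 0 < q 0)
    (Q : ℕ → ℝ) (hQ : ∀ n, Q n = ∑ k ∈ Finset.range n, q k)
    (hlim : ∃ L, Tendsto (fun k => Q (2 ^ k) / Q (2 ^ (k - 1))) atTop (nhds L))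
    (h0 : Tendsto (fun k => 2 ^ k * q (2 ^ k) / Q (2 ^ k)) atTop (nhds 0)) :
    Tendsto (fun k => Q (2 ^ k) / Q (2 ^ (k - 1))) atTop (nhds 1) := by
  have hQpos : ∀ n, 0 < n → 0 < Q n := by
    intro n hn
    rw [hQ]
    calc (0:ℝ) < q 0 := hq0'
    _ ≤ ∑ k ∈ Finset.range n, q k := by
        apply Finset.single_le_sum (fun i _ => hq0 i)
        simpa using hn
  have hQmono : ∀ m n : ℕ, m ≤ n → Q m ≤ Q n := by
    intro m n hmn
    rw [hQ, hQ]
    exact Finset.sum_le_sum_of_subset_of_nonneg (Finset.range_subset_range.2 hmn)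
      (fun i _ _ => hq0 i)
  -- upper bound function
  have hupper : ∀ k : ℕ, 1 ≤ k →
      Q (2 ^ k) / Q (2 ^ (k - 1)) ≤
      1 + 2 ^ (k - 1) * q (2 ^ (k - 1)) / Q (2 ^ (k - 1)) := by
    intro k hk
    have hpos : (0:ℝ) < Q (2 ^ (k - 1)) := hQpos _ (Nat.pow_pos (by norm_num))
    rw [div_le_iff₀ hpos]
    have heq : (1 + 2 ^ (k - 1) * q (2 ^ (k - 1)) / Q (2 ^ (k - 1))) * Q (2 ^ (k - 1))
        = Q (2 ^ (k - 1)) + 2 ^ (k - 1) * q (2 ^ (k - 1)) := by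
      field_simp
    rw [heq]
    have key : Q (2 ^ k) ≤ Q (2 ^ (k - 1)) + 2 ^ (k - 1) * q (2 ^ (k - 1)) := by
      have hle : (2:ℕ) ^ (k - 1) ≤ 2 ^ k := Nat.pow_le_pow_right (by norm_num) (Nat.sub_le _ _)
      have hsplit : Q (2 ^ (k - 1)) + ∑ i ∈ Finset.Ico (2 ^ (k - 1)) (2 ^ k), q i
          = Q (2 ^ k) := by
        rw [hQ, hQ]
        exact Finset.sum_range_add_sum_Ico _ hle
      have hbound : ∑ i ∈ Finset.Ico (2 ^ (k - 1)) (2 ^ k), q i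
          ≤ 2 ^ (k - 1) * q (2 ^ (k - 1)) := by
        have hcard : (Finset.Ico (2 ^ (k - 1)) (2 ^ k)).card = 2 ^ (k - 1) := by
          rw [Nat.card_Ico]
          obtain ⟨m, rfl⟩ : ∃ m, k = m + 1 := ⟨k - 1, (Nat.succ_pred_eq_of_pos hk).symm⟩
          simp [pow_succ]
          omega
        calc ∑ i ∈ Finset.Ico (2 ^ (k - 1)) (2 ^ k), q i
            ≤ (Finset.Ico (2 ^ (k - 1)) (2 ^ k)).card • q (2 ^ (k - 1)) := by
              apply Finset.sum_le_card_nsmul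
              intro i hi
              exact hq (Finset.mem_Ico.1 hi).1
          _ = 2 ^ (k - 1) * q (2 ^ (k - 1)) := by
              rw [hcard, nsmul_eq_mul]
              push_cast
              ring
      linarith
    exact key
  have hlower : ∀ k : ℕ, 1 ≤ Q (2 ^ k) / Q (2 ^ (k - 1)) := by
    intro k
    have hpos : (0:ℝ) < Q (2 ^ (k - 1)) := hQpos _ (Nat.pow_pos (by norm_num))
    rw [le_div_iff₀ hpos, one_mul]
    exact hQmono _ _ (Nat.pow_le_pow_right (by norm_num) (Nat.sub_le _ _))
  -- the upper bound tends to 1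
  have hshift : Tendsto (fun k => 2 ^ (k - 1) * q (2 ^ (k - 1)) / Q (2 ^ (k - 1)))
      atTop (nhds 0) := h0.comp (tendsto_sub_atTop_nat 1)
  have hub : Tendsto (fun k => 1 + 2 ^ (k - 1) * q (2 ^ (k - 1)) / Q (2 ^ (k - 1)))
      atTop (nhds 1) := by
    have := tendsto_const_nhds (x := (1:ℝ)) (f := atTop (α := ℕ)) |>.add hshift
    simpa using this
  apply tendsto_of_tendsto_of_tendsto_of_le_of_le' tendsto_const_nhds hub
  · exact Eventually.of_forall hlower
  · filter_upwards [eventually_ge_atTop 1] with k hk using hupper k hk
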